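/- Let $x_1,\dots,x_I \in \mathbb{R}^n$ and let $A$ be the $n \times I$ matrix whose columns are the $x_i$. Among all orthogonal projections $P \in \mathbb{R}^{n\times n}$ of rank at most $d$, the quantity $\sum_{i=1}^I \|Px_i - x_i\|^2$ is minimized by $P = U_d U_d^T$, where $U_d$ is the matrix of the first $d$ left singular vectors of $A$. -/
import Mathlib


open Matrix


lemma trace_of_idem {n : ℕ} {P : Matrix (Fin n) (Fin n) ℝ} (hP : P * P = P) :
    Matrix.trace P = (P.rank : ℝ) := by
  have hf : P.mulVecLin ∘ₗ P.mulVecLin = P.mulVecLin := by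
    rw [← Matrix.mulVecLin_mul, hP]
  have hp : LinearMap.IsProj (LinearMap.range P.mulVecLin) P.mulVecLin := by
    constructor
    · intro x; exact LinearMap.mem_range_self _ x
    · rintro x ⟨y, rfl⟩
      exact LinearMap.congr_fun hf y
  have ht := hp.trace
  rw [LinearMap.trace_eq_matrix_trace ℝ (Pi.basisFun ℝ (Fin n)),
    LinearMap.toMatrix_eq_toMatrix'] at ht
  have h2 : LinearMap.toMatrix' P.mulVecLin = P := LinearMap.toMatrix'_toLin' P
  rw [h2] at ht
  rw [ht]; rfl

-- sum as trace
lemma sum_sq_eq_trace {n I : ℕ} (Q : Matrix (Fin n) (Fin n) ℝ)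
    (A : Matrix (Fin n) (Fin I) ℝ) :
    (∑ i : Fin I, ∑ j : Fin n, (Q.mulVec (fun k => A k i) j - A j i) ^ 2) =
      Matrix.trace ((Q * A - A)ᵀ * (Q * A - A)) := by
  rw [Matrix.trace]
  apply Finset.sum_congr rfl
  intro i _
  simp only [Matrix.diag, Matrix.mul_apply, Matrix.transpose_apply, Matrix.sub_apply,
    Matrix.mulVec, dotProduct, Matrix.mul_apply]
  apply Finset.sum_congr rfl
  intro j _
  ring

-- Frobenius identity for symmetric idempotent Q
lemma frob_eq {n I : ℕ} (Q : Matrix (Fin n) (Fin n) ℝ) (A : Matrix (Fin n) (Fin I) ℝ)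
    (hQs : Qᵀ = Q) (hQi : Q * Q = Q) :
    Matrix.trace ((Q * A - A)ᵀ * (Q * A - A)) =
      Matrix.trace (Aᵀ * A) - Matrix.trace (Aᵀ * Q * A) := by
  have h1 : (Q * A - A)ᵀ * (Q * A - A) = Aᵀ * A - Aᵀ * Q * A := by
    rw [Matrix.transpose_sub, Matrix.transpose_mul, hQs, Matrix.sub_mul, Matrix.mul_sub,
      Matrix.mul_sub]
    rw [Matrix.mul_assoc Aᵀ Q (Q * A), ← Matrix.mul_assoc Q Q A, hQi]
    rw [Matrix.mul_assoc Aᵀ Q A]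
    abel
  rw [h1, Matrix.trace_sub]

-- diag entries of a symmetric idempotent matrix lie in [0,1]
lemma diag_bounds {n : ℕ} {M : Matrix (Fin n) (Fin n) ℝ} (hs : Mᵀ = M) (hi : M * M = M)
    (i : Fin n) : 0 ≤ M i i ∧ M i i ≤ 1 := by
  have h1 : M i i = ∑ k, (M i k) ^ 2 := by
    conv_lhs => rw [← hi]
    rw [Matrix.mul_apply]
    apply Finset.sum_congr rfl
    intro k _
    have hk : M k i = M i k := by
      conv_lhs => rw [← hs, Matrix.transpose_apply]
    rw [hk]; ring
  have h2 : (M i i) ^ 2 ≤ ∑ k, (M i k) ^ 2 :=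
    Finset.single_le_sum (f := fun k => (M i k) ^ 2) (fun k _ => sq_nonneg _)
      (Finset.mem_univ i)
  constructor
  · rw [h1]; positivity
  · nlinarith [h2, h1]

-- cardinality count
lemma sum_ind {n d : ℕ} (hd : d ≤ n) :
    (∑ i : Fin n, if (i : ℕ) < d then (1 : ℝ) else 0) = d := by
  rw [Finset.sum_boole]
  congr 1
  have : Finset.univ.filter (fun i : Fin n => (i : ℕ) < d) =
      Finset.univ.map (Fin.castLEEmb hd) := by
    ext a
    rw [Finset.mem_filter, Finset.mem_map]
    constructor
    · intro h
      exact ⟨⟨(a : ℕ), h.2⟩, Finset.mem_univ _, by ext; simp [Fin.castLEEmb, Fin.castLE]⟩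
    · rintro ⟨b, -, rfl⟩
      exact ⟨Finset.mem_univ _, by simpa [Fin.castLEEmb, Fin.castLE] using b.isLt⟩
  rw [this, Finset.card_map, Finset.card_univ, Fintype.card_fin]

-- the rearrangement inequality
lemma sum_ineq {n d : ℕ} (hd : d ≤ n) (t m : Fin n → ℝ)
    (ht0 : ∀ i, 0 ≤ t i) (htm : ∀ i j : Fin n, i ≤ j → t j ≤ t i)
    (hm0 : ∀ i, 0 ≤ m i) (hm1 : ∀ i, m i ≤ 1) (hms : (∑ i, m i) ≤ d) :
    ∑ i, t i * m i ≤ ∑ i : Fin n, (if (i : ℕ) < d then t i else 0) := by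
  set s : ℝ := if h : d < n then t ⟨d, h⟩ else 0 with hs
  have hs0 : 0 ≤ s := by
    rw [hs]; split
    · exact ht0 _
    · exact le_rfl
  have key : ∀ i : Fin n, t i * m i - (if (i : ℕ) < d then t i else 0) ≤
      s * (m i - (if (i : ℕ) < d then (1:ℝ) else 0)) := by
    intro i
    by_cases h : (i : ℕ) < d
    · simp only [if_pos h]
      have hsi : s ≤ t i := by
        rw [hs]; split
        · next h' => exact htm i ⟨d, h'⟩ (by simp [Fin.le_def]; omega)
        · exact ht0 i
      nlinarith [hm1 i]
    · simp only [if_neg h]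
      have hdn : d < n := lt_of_le_of_lt (Nat.le_of_not_lt h) i.isLt
      have hsi : t i ≤ s := by
        rw [hs, dif_pos hdn]
        exact htm ⟨d, hdn⟩ i (by simp [Fin.le_def]; omega)
      nlinarith [hm0 i]
  have h2 := Finset.sum_le_sum (fun i (_ : i ∈ Finset.univ) => key i)
  rw [Finset.sum_sub_distrib, ← Finset.mul_sum, Finset.sum_sub_distrib, sum_ind hd] at h2
  nlinarith [mul_nonneg hs0 (sub_nonneg.mpr hms)]

lemma trace_APA {n I : ℕ} (U : Matrix (Fin n) (Fin n) ℝ) (S : Matrix (Fin n) (Fin I) ℝ)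
    (V : Matrix (Fin I) (Fin I) ℝ) (hV : Vᵀ * V = 1) (σ : Fin n → ℝ)
    (hSS : S * Sᵀ = Matrix.diagonal (fun i => σ i ^ 2)) (P : Matrix (Fin n) (Fin n) ℝ) :
    Matrix.trace ((U * S * Vᵀ)ᵀ * P * (U * S * Vᵀ)) =
      ∑ i : Fin n, σ i ^ 2 * (Uᵀ * P * U) i i := by
  have h1 : (U * S * Vᵀ)ᵀ * P * (U * S * Vᵀ) = V * (Sᵀ * (Uᵀ * P * U) * S) * Vᵀ := by
    simp only [Matrix.transpose_mul, Matrix.transpose_transpose, Matrix.mul_assoc]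
  rw [h1, Matrix.trace_mul_comm, ← Matrix.mul_assoc, hV, Matrix.one_mul,
    Matrix.trace_mul_comm, ← Matrix.mul_assoc, hSS]
  simp only [Matrix.trace, Matrix.diag, Matrix.mul_apply, Matrix.diagonal_apply]
  rw [Finset.sum_comm]
  apply Finset.sum_congr rfl
  intro i _
  rw [Finset.sum_eq_single i]
  · simp
  · intro b _ hb; simp [hb]
  · simp


/-- **PCA optimality / Eckart–Young.** Among all orthogonal projections `P` (symmetric
idempotent matrices) of rank at most `d`, the quantity `∑ i ‖P xᵢ - xᵢ‖²` (where the
`xᵢ` are the columns of `A`) is minimized by `P = Ud * Udᵀ`, where `Ud` consists of the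
first `d` left singular vectors of `A` (from an SVD `A = U S Vᵀ` with nonincreasing
nonnegative diagonal `S`). -/
theorem pca_projection_optimal {n I d : ℕ} (hd : d ≤ n)
    (A : Matrix (Fin n) (Fin I) ℝ)
    (U : Matrix (Fin n) (Fin n) ℝ) (S : Matrix (Fin n) (Fin I) ℝ)
    (V : Matrix (Fin I) (Fin I) ℝ)
    (hU : Uᵀ * U = 1) (hV : Vᵀ * V = 1)
    (hSVD : A = U * S * Vᵀ)
    (hdiag : ∀ (i : Fin n) (j : Fin I), (i : ℕ) ≠ (j : ℕ) → S i j = 0)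
    (hnonneg : ∀ (i : Fin n) (j : Fin I), (i : ℕ) = (j : ℕ) → 0 ≤ S i j)
    (hmono : ∀ (i i' : Fin n) (j j' : Fin I), (i : ℕ) = (j : ℕ) → (i' : ℕ) = (j' : ℕ) →
      (i : ℕ) ≤ (i' : ℕ) → S i' j' ≤ S i j)
    (Ud : Matrix (Fin n) (Fin d) ℝ) (hUd : Ud = U.submatrix id (Fin.castLE hd)) :
    ∀ P : Matrix (Fin n) (Fin n) ℝ, Pᵀ = P → P * P = P → P.rank ≤ d →
      (∑ i : Fin I, ∑ j : Fin n,
          ((Ud * Udᵀ).mulVec (fun k => A k i) j - A j i) ^ 2) ≤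
        ∑ i : Fin I, ∑ j : Fin n, (P.mulVec (fun k => A k i) j - A j i) ^ 2 := by
  intro P hPs hPi hPr
  have hUU : U * Uᵀ = 1 := mul_eq_one_comm.mp hU
  -- singular values
  set σ : Fin n → ℝ := fun i => if h : (i : ℕ) < I then S i ⟨(i : ℕ), h⟩ else 0 with hσ
  have hσ0 : ∀ i, 0 ≤ σ i := by
    intro i
    rw [hσ]
    dsimp only
    split
    · exact hnonneg _ _ rfl
    · exact le_rfl
  have hσm : ∀ i j : Fin n, i ≤ j → σ j ≤ σ i := by
    intro i j hij
    rw [hσ]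
    dsimp only
    by_cases hj : (j : ℕ) < I
    · have hi : (i : ℕ) < I := lt_of_le_of_lt hij hj
      rw [dif_pos hi, dif_pos hj]
      exact hmono i j ⟨(i : ℕ), hi⟩ ⟨(j : ℕ), hj⟩ rfl rfl hij
    · rw [dif_neg hj]
      split
      · exact hnonneg _ _ rfl
      · exact le_rfl
  -- S * Sᵀ is diagonal
  have hSS : S * Sᵀ = Matrix.diagonal (fun i => σ i ^ 2) := by
    ext i k
    rw [Matrix.mul_apply, Matrix.diagonal_apply]
    by_cases hik : i = k
    · subst hik
      rw [if_pos rfl, hσ]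
      dsimp only
      by_cases h : (i : ℕ) < I
      · rw [dif_pos h, Finset.sum_eq_single (⟨(i : ℕ), h⟩ : Fin I)]
        · simp [pow_two]
        · intro b _ hb
          have : (i : ℕ) ≠ (b : ℕ) := fun hc => hb (by ext; simp [← hc])
          simp [hdiag i b this]
        · simp
      · rw [dif_neg h, Finset.sum_eq_zero]
        · ring
        · intro j _
          have : (i : ℕ) ≠ (j : ℕ) := by omega
          simp [hdiag i j this]
    · rw [if_neg hik, Finset.sum_eq_zero]
      intro j _
      have hik' : (i : ℕ) ≠ (k : ℕ) := fun hc => hik (by ext; exact hc)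
      rcases Nat.lt_or_ge (j : ℕ) I with _ | _
      · by_cases hij : (i : ℕ) = (j : ℕ)
        · have : (k : ℕ) ≠ (j : ℕ) := by omega
          simp [hdiag k j this]
        · simp [hdiag i j hij]
      · simp [hdiag i j (by omega)]
  -- the projection Q = Ud * Udᵀ
  have hQs : (Ud * Udᵀ)ᵀ = Ud * Udᵀ := by
    rw [Matrix.transpose_mul, Matrix.transpose_transpose]
  have hdd : Udᵀ * Ud = 1 := by
    rw [hUd]
    ext k k'
    have h := congrFun (congrFun hU (Fin.castLE hd k)) (Fin.castLE hd k')
    simp only [Matrix.mul_apply, Matrix.transpose_apply, Matrix.one_apply,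
      Matrix.submatrix_apply, id] at h ⊢
    rw [h]
    simp only [Fin.castLE_inj]
  have hQi : (Ud * Udᵀ) * (Ud * Udᵀ) = Ud * Udᵀ := by
    rw [Matrix.mul_assoc, ← Matrix.mul_assoc Udᵀ Ud Udᵀ, hdd, Matrix.one_mul]
  -- conjugated projections
  have hMs : (Uᵀ * P * U)ᵀ = Uᵀ * P * U := by
    rw [Matrix.transpose_mul, Matrix.transpose_mul, Matrix.transpose_transpose, hPs,
      Matrix.mul_assoc]
  have hMi : (Uᵀ * P * U) * (Uᵀ * P * U) = Uᵀ * P * U := by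
    have h1 : (Uᵀ * P * U) * (Uᵀ * P * U) = Uᵀ * (P * ((U * Uᵀ) * (P * U))) := by
      simp only [Matrix.mul_assoc]
    rw [h1, hUU, Matrix.one_mul, ← Matrix.mul_assoc P P U, hPi, ← Matrix.mul_assoc]
  -- trace bound
  have htr : (∑ i : Fin n, (Uᵀ * P * U) i i) ≤ (d : ℝ) := by
    have h1 : Matrix.trace (Uᵀ * P * U) = Matrix.trace P := by
      rw [Matrix.trace_mul_comm, ← Matrix.mul_assoc, hUU, Matrix.one_mul]
    have h2 : Matrix.trace P = (P.rank : ℝ) := trace_of_idem hPi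
    have h3 : (P.rank : ℝ) ≤ (d : ℝ) := Nat.cast_le.mpr hPr
    calc (∑ i : Fin n, (Uᵀ * P * U) i i) = Matrix.trace (Uᵀ * P * U) := rfl
      _ ≤ (d : ℝ) := by rw [h1, h2]; exact h3
  -- diagonal of conjugated Q
  have hE : Uᵀ * Ud = (1 : Matrix (Fin n) (Fin n) ℝ).submatrix id (Fin.castLE hd) := by
    rw [hUd]
    ext i k
    have h := congrFun (congrFun hU i) (Fin.castLE hd k)
    simp only [Matrix.mul_apply, Matrix.transpose_apply, Matrix.submatrix_apply, id] at h ⊢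
    exact h
  have hMQ : ∀ i : Fin n, (Uᵀ * (Ud * Udᵀ) * U) i i = if (i : ℕ) < d then 1 else 0 := by
    intro i
    have hQM : Uᵀ * (Ud * Udᵀ) * U = (Uᵀ * Ud) * (Uᵀ * Ud)ᵀ := by
      rw [Matrix.transpose_mul, Matrix.transpose_transpose]
      simp only [Matrix.mul_assoc]
    rw [hQM, hE, Matrix.mul_apply]
    simp only [Matrix.transpose_apply, Matrix.submatrix_apply, id, Matrix.one_apply]
    by_cases h : (i : ℕ) < d
    · rw [Finset.sum_eq_single (⟨(i : ℕ), h⟩ : Fin d), if_pos h]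
      · simp [Fin.castLE, Fin.ext_iff]
      · intro b _ hb
        have : i ≠ Fin.castLE hd b := by
          intro hc
          exact hb (by ext; exact (congrArg Fin.val hc).symm)
        simp [if_neg this]
      · simp
    · rw [Finset.sum_eq_zero, if_neg h]
      intro k _
      have : i ≠ Fin.castLE hd k := by
        intro hc
        have := congrArg Fin.val hc
        simp [Fin.castLE] at this
        omega
      simp [if_neg this]
  -- main computation
  rw [sum_sq_eq_trace, sum_sq_eq_trace, frob_eq _ _ hQs hQi, frob_eq _ _ hPs hPi]
  apply sub_le_sub_left
  rw [hSVD, trace_APA U S V hV σ hSS, trace_APA U S V hV σ hSS]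
  have hrw : (∑ i : Fin n, σ i ^ 2 * (Uᵀ * (Ud * Udᵀ) * U) i i) =
      ∑ i : Fin n, (if (i : ℕ) < d then σ i ^ 2 else 0) := by
    apply Finset.sum_congr rfl
    intro i _
    rw [hMQ i]
    split <;> ring
  rw [hrw]
  have := sum_ineq hd (fun i => σ i ^ 2) (fun i => (Uᵀ * P * U) i i)
    (fun i => sq_nonneg _)
    (fun i j hij => pow_le_pow_left₀ (hσ0 j) (hσm i j hij) 2)
    (fun i => (diag_bounds hMs hMi i).1)
    (fun i => (diag_bounds hMs hMi i).2)
    htr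
  exact this
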